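/- The Dirichlet series ∑_n (1/α_n^s - 1/β_n^s), where (α_n), (β_n) are increasing interlaced real sequences with α_n ≤ β_n ≤ α_{n+1}, α_1 > 1, and ∑ α_n^{-λ} < ∞ for all λ > 1, converges to an analytic function on the half-plane Re(s) > 0. -/

import Mathlib

open Complex

/-- Key estimate: for `1 < a ≤ b` and `0 < σ' ≤ Re s`,
`‖a^(-s) - b^(-s)‖ ≤ (‖s‖/σ') * (a^(-σ') - b^(-σ'))`. -/
lemma key_bound (a b : ℝ) (ha : 1 < a) (hab : a ≤ b) (s : ℂ) (σ' : ℝ)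
    (hσ : 0 < σ') (hσs : σ' ≤ s.re) :
    ‖(a : ℂ) ^ (-s) - (b : ℂ) ^ (-s)‖ ≤ ‖s‖ / σ' * (a ^ (-σ') - b ^ (-σ')) := by
  have ha0 : (0 : ℝ) < a := lt_trans one_pos ha
  have hb0 : (0 : ℝ) < b := lt_of_lt_of_le ha0 hab
  have hs0 : s ≠ 0 := by
    intro h
    rw [h] at hσs
    simp at hσs
    linarith
  have h0mem : (0 : ℝ) ∉ Set.uIcc a b := by
    rw [Set.uIcc_of_le hab]
    intro h
    exact absurd h.1 (not_le.mpr ha0)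
  -- integral formula
  have hI : (∫ x : ℝ in a..b, (x : ℂ) ^ (-s - 1)) =
      ((b : ℂ) ^ (-s) - (a : ℂ) ^ (-s)) / (-s) := by
    have := integral_cpow (a := a) (b := b) (r := -s - 1)
      (Or.inr ⟨by
        intro h
        apply hs0
        have : -s = (0 : ℂ) := by linear_combination h
        simpa using congrArg Neg.neg this, h0mem⟩)
    simpa using this
  have heq : (a : ℂ) ^ (-s) - (b : ℂ) ^ (-s) = s * ∫ x : ℝ in a..b, (x : ℂ) ^ (-s - 1) := by
    rw [hI, div_neg, mul_neg, mul_div_cancel₀ _ hs0]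
    ring
  rw [heq, norm_mul]
  have hnormint : ‖∫ x : ℝ in a..b, (x : ℂ) ^ (-s - 1)‖ ≤ (a ^ (-σ') - b ^ (-σ')) / σ' := by
    have h1 : ‖∫ x : ℝ in a..b, (x : ℂ) ^ (-s - 1)‖ ≤
        ∫ x : ℝ in a..b, ‖(x : ℂ) ^ (-s - 1)‖ :=
      intervalIntegral.norm_integral_le_integral_norm hab
    have h2 : (∫ x : ℝ in a..b, ‖(x : ℂ) ^ (-s - 1)‖) ≤ ∫ x : ℝ in a..b, x ^ (-σ' - 1) := by
      apply intervalIntegral.integral_mono_on hab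
      · exact (intervalIntegral.intervalIntegrable_cpow (Or.inr h0mem)).norm
      · exact intervalIntegral.intervalIntegrable_rpow (Or.inr h0mem)
      · intro x hx
        have hx1 : (1 : ℝ) ≤ x := le_trans (le_of_lt ha) hx.1
        have hx0 : (0 : ℝ) < x := lt_of_lt_of_le one_pos hx1
        rw [Complex.norm_cpow_eq_rpow_re_of_pos hx0]
        have : (-s - 1).re = -s.re - 1 := by simp
        rw [this]
        exact Real.rpow_le_rpow_of_exponent_le hx1 (by linarith)
    have h3 : (∫ x : ℝ in a..b, x ^ (-σ' - 1)) = (a ^ (-σ') - b ^ (-σ')) / σ' := by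
      rw [integral_rpow (Or.inr ⟨by intro h; linarith [hσ], h0mem⟩)]
      have : -σ' - 1 + 1 = -σ' := by ring
      rw [this, div_neg, ← neg_div, neg_sub]
    linarith
  calc ‖s‖ * ‖∫ x : ℝ in a..b, (x : ℂ) ^ (-s - 1)‖
      ≤ ‖s‖ * ((a ^ (-σ') - b ^ (-σ')) / σ') := by
        apply mul_le_mul_of_nonneg_left hnormint (norm_nonneg s)
    _ = ‖s‖ / σ' * (a ^ (-σ') - b ^ (-σ')) := by ring

/-- Partial sums of the interlaced differences are bounded. -/
lemma partial_sum_bound (α β : ℕ → ℝ) (hαmono : StrictMono α)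
    (hinter : ∀ n, α n ≤ β n ∧ β n ≤ α (n + 1)) (hα1 : 1 < α 0)
    (σ : ℝ) (hσ : 0 < σ) (N : ℕ) :
    ∑ n ∈ Finset.range N, (α n ^ (-σ) - β n ^ (-σ)) ≤ α 0 ^ (-σ) := by
  have hαpos : ∀ n, (0 : ℝ) < α n := fun n =>
    lt_of_lt_of_le (lt_trans one_pos hα1) (hαmono.monotone (Nat.zero_le n))
  have hβpos : ∀ n, (0 : ℝ) < β n := fun n => lt_of_lt_of_le (hαpos n) (hinter n).1
  have key : ∀ N, ∑ n ∈ Finset.range (N + 1), (α n ^ (-σ) - β n ^ (-σ))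
      ≤ α 0 ^ (-σ) - β N ^ (-σ) := by
    intro N
    induction N with
    | zero => simp
    | succ N ih =>
      rw [Finset.sum_range_succ]
      have h1 : α (N + 1) ^ (-σ) ≤ β N ^ (-σ) :=
        Real.rpow_le_rpow_of_nonpos (hβpos N) (hinter N).2 (by linarith)
      linarith
  cases N with
  | zero => simp; positivity
  | succ N =>
    have := key N
    have : β N ^ (-σ) > 0 := Real.rpow_pos_of_pos (hβpos N) _
    linarith [key N]

lemma diff_summable (α β : ℕ → ℝ) (hαmono : StrictMono α)
    (hinter : ∀ n, α n ≤ β n ∧ β n ≤ α (n + 1)) (hα1 : 1 < α 0)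
    (σ : ℝ) (hσ : 0 < σ) :
    Summable (fun n => α n ^ (-σ) - β n ^ (-σ)) := by
  have hαpos : ∀ n, (0 : ℝ) < α n := fun n =>
    lt_of_lt_of_le (lt_trans one_pos hα1) (hαmono.monotone (Nat.zero_le n))
  apply summable_of_sum_range_le (c := α 0 ^ (-σ))
  · intro n
    have : β n ^ (-σ) ≤ α n ^ (-σ) :=
      Real.rpow_le_rpow_of_nonpos (hαpos n) (hinter n).1 (by linarith)
    linarith
  · exact partial_sum_bound α β hαmono hinter hα1 σ hσ

theorem stmt2 (α β : ℕ → ℝ)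
    (hαmono : StrictMono α) (hβmono : StrictMono β)
    (hinter : ∀ n, α n ≤ β n ∧ β n ≤ α (n + 1)) (hα1 : 1 < α 0)
    (hsum : ∀ l : ℝ, 1 < l → Summable fun n => (α n) ^ (-l)) :
    ∃ g : ℂ → ℂ,
      AnalyticOn ℂ g {s : ℂ | 0 < s.re} ∧
      ∀ s ∈ {s : ℂ | 0 < s.re},
        HasSum (fun n => (α n : ℂ) ^ (-s) - (β n : ℂ) ^ (-s)) (g s) := by
  have hα1' : ∀ n, 1 < α n := fun n =>
    lt_of_lt_of_le hα1 (hαmono.monotone (Nat.zero_le n))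
  have hαβ : ∀ n, α n ≤ β n := fun n => (hinter n).1
  set F : ℕ → ℂ → ℂ := fun n s => (α n : ℂ) ^ (-s) - (β n : ℂ) ^ (-s) with hF
  refine ⟨fun s => ∑' n, F n s, ?_, ?_⟩
  · -- analyticity
    have hopen : IsOpen {s : ℂ | 0 < s.re} := isOpen_lt continuous_const Complex.continuous_re
    apply DifferentiableOn.analyticOn ?_ hopen
    intro s₀ hs₀
    replace hs₀ : 0 < s₀.re := hs₀
    set σ₀ := s₀.re / 2 with hσ₀def
    have hσ₀ : 0 < σ₀ := by positivity
    set M := ‖s₀‖ + σ₀ with hMdef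
    set U := Metric.ball s₀ σ₀ with hU
    have hdiffU : DifferentiableOn ℂ (fun s => ∑' n, F n s) U := by
      apply differentiableOn_tsum_of_summable_norm
        (u := fun n => M / σ₀ * (α n ^ (-σ₀) - β n ^ (-σ₀)))
      · exact (diff_summable α β hαmono hinter hα1 σ₀ hσ₀).mul_left _
      · intro n
        apply DifferentiableOn.sub <;>
        · apply DifferentiableOn.const_cpow (by fun_prop)
          left
          simp only [Ne, Complex.ofReal_eq_zero]
          intro h
          linarith [hα1' n, hαβ n, h ▸ (by norm_num : ¬ (1:ℝ) < 0)]
      · exact Metric.isOpen_ball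
      · intro n w hw
        have hwre : σ₀ ≤ w.re := by
          simp only [hU, Metric.mem_ball, Complex.dist_eq] at hw
          have h1 : |(w - s₀).re| ≤ ‖w - s₀‖ := Complex.abs_re_le_norm _
          have h2 := abs_le.mp (le_of_lt (lt_of_le_of_lt h1 hw))
          simp only [Complex.sub_re] at h2
          have := h2.1
          simp only [hσ₀def] at *
          linarith
        have hwnorm : ‖w‖ ≤ M := by
          simp only [hU, Metric.mem_ball, Complex.dist_eq] at hw
          calc ‖w‖ = ‖s₀ + (w - s₀)‖ := by ring_nf
            _ ≤ ‖s₀‖ + ‖w - s₀‖ := norm_add_le _ _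
            _ ≤ M := by
                simp only [hMdef]
                have : ‖w - s₀‖ = ‖w - s₀‖ := rfl
                linarith [le_of_lt hw]
        calc ‖F n w‖ ≤ ‖w‖ / σ₀ * (α n ^ (-σ₀) - β n ^ (-σ₀)) :=
              key_bound (α n) (β n) (hα1' n) (hαβ n) w σ₀ hσ₀ hwre
          _ ≤ M / σ₀ * (α n ^ (-σ₀) - β n ^ (-σ₀)) := by
              apply mul_le_mul_of_nonneg_right
              · gcongr
              · have : β n ^ (-σ₀) ≤ α n ^ (-σ₀) :=
                  Real.rpow_le_rpow_of_nonpos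
                    (lt_trans one_pos (hα1' n)) (hαβ n) (by linarith)
                linarith
    exact (hdiffU.differentiableAt (Metric.isOpen_ball.mem_nhds (Metric.mem_ball_self hσ₀))).differentiableWithinAt
  · -- pointwise HasSum
    intro s hs
    simp only [Set.mem_setOf_eq] at hs
    have hsummable : Summable (fun n => F n s) := by
      apply Summable.of_norm
      apply Summable.of_nonneg_of_le (fun n => norm_nonneg _)
        (fun n => key_bound (α n) (β n) (hα1' n) (hαβ n) s s.re hs le_rfl)
      exact (diff_summable α β hαmono hinter hα1 s.re hs).mul_left _
    exact hsummable.hasSum
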